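/- Let F be a metrizable locally convex topological vector space over ℝ, and let (xₙ) be a sequence in F converging to x ∈ F. Then there exists a strictly increasing function φ : ℕ → ℕ such that the subsequence (x_{φ(j)}) converges rapidly to x, i.e. for every k ∈ ℕ, the set { (j : ℝ)^k • (x_{φ(j)} − x) | j ∈ ℕ } is von Neumann bounded in F. -/

import Mathlib

/-- Lemma A.5: every convergent sequence in a metrizable locally convex real topological
vector space has a subsequence converging rapidly, i.e. such that for every `k`, the set
`{ j^k • (x_{φ j} - x) }` is von Neumann bounded. -/
theorem rapidly_converging_subsequence
    {F : Type*} [AddCommGroup F] [Module ℝ F] [TopologicalSpace F]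
    [IsTopologicalAddGroup F] [ContinuousSMul ℝ F] [LocallyConvexSpace ℝ F]
    [TopologicalSpace.MetrizableSpace F]
    (x : F) (xn : ℕ → F) (hx : Filter.Tendsto xn Filter.atTop (nhds x)) :
    ∃ φ : ℕ → ℕ, StrictMono φ ∧
      ∀ k : ℕ, Bornology.IsVonNBounded ℝ
        (Set.range fun j : ℕ => (j : ℝ) ^ k • (xn (φ j) - x)) := by
  -- a countable antitone basis of neighborhoods of 0
  obtain ⟨B, hB⟩ := (nhds (0 : F)).exists_antitone_basis
  -- shrink to balanced neighborhoods
  set U : ℕ → Set F := fun n => balancedCore ℝ (B n) with hUdef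
  have hUmem : ∀ n, U n ∈ nhds (0 : F) := fun n =>
    balancedCore_mem_nhds_zero (hB.mem n)
  have hUsub : ∀ n, U n ⊆ B n := fun n => balancedCore_subset (B n)
  have hUbal : ∀ n, Balanced ℝ (U n) := fun n => balancedCore_balanced (B n)
  -- the sequence xn n - x tends to 0
  have h0 : Filter.Tendsto (fun n => xn n - x) Filter.atTop (nhds 0) := by
    simpa using hx.sub_const x
  -- choose the extraction
  have hP : ∀ j : ℕ, ∀ᶠ n in Filter.atTop,
      ((j : ℝ) + 1) ^ j • (xn n - x) ∈ U j := by
    intro j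
    have : Filter.Tendsto (fun n => ((j : ℝ) + 1) ^ j • (xn n - x))
        Filter.atTop (nhds 0) := by
      simpa using h0.const_smul (((j : ℝ) + 1) ^ j)
    exact this.eventually_mem (hUmem j)
  obtain ⟨φ, hφmono, hφ⟩ := Filter.extraction_forall_of_eventually hP
  refine ⟨φ, hφmono, fun k => ?_⟩
  refine Filter.Tendsto.isVonNBounded_range ℝ (x := 0) ?_
  rw [hB.toHasBasis.tendsto_right_iff]
  intro m _
  filter_upwards [Filter.eventually_ge_atTop (max m k)] with j hj
  have hjm : m ≤ j := le_of_max_le_left hj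
  have hjk : k ≤ j := le_of_max_le_right hj
  have hpos : (0 : ℝ) < ((j : ℝ) + 1) ^ j := by positivity
  have hle : (j : ℝ) ^ k ≤ ((j : ℝ) + 1) ^ j := by
    calc (j : ℝ) ^ k ≤ ((j : ℝ) + 1) ^ k := by
          apply pow_le_pow_left₀ (by positivity)
          linarith
      _ ≤ ((j : ℝ) + 1) ^ j := by
          apply pow_le_pow_right₀ (by linarith [Nat.cast_nonneg (α := ℝ) j]) hjk
  have habs : |(j : ℝ) ^ k / ((j : ℝ) + 1) ^ j| ≤ 1 := by
    rw [abs_of_nonneg (by positivity)]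
    exact div_le_one_of_le₀ hle hpos.le
  have hw : ((j : ℝ) + 1) ^ j • (xn (φ j) - x) ∈ U j := hφ j
  have key : (j : ℝ) ^ k • (xn (φ j) - x)
      = ((j : ℝ) ^ k / ((j : ℝ) + 1) ^ j) • (((j : ℝ) + 1) ^ j • (xn (φ j) - x)) := by
    rw [smul_smul, div_mul_cancel₀ _ hpos.ne']
  rw [key]
  exact hB.antitone hjm (hUsub j (hUbal j _ habs (Set.smul_mem_smul_set hw)))
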